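/- Let D be a delta-matroid on [n]. If n = 0 then U_D(u,v) = 1. For any i ∈ [n]: if i is neither a loop nor a coloop of D, then U_D(u,v) = U_{D/i}(u,v) + U_{D∖i}(u,v) + u·U_{D({i})}(u,v); if i is a loop or a coloop of D, then U_D(u,v) = (u + v + 1)·U_{D({i})}(u,v). -/

import Mathlib

open Finset
open scoped symmDiff

/-- The rank-type function of a nonempty family `G` of subsets of `Fin n`, evaluated on an
admissible set `(Sp, Sn)`: `max_{F ∈ G} (|Sp ∩ F| + |Sn \ F| − |Sn ∩ F| − |Sp \ F|)`.
(Junk value `0` when the family is empty.) -/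
noncomputable def gFam {n : ℕ} (G : Finset (Finset (Fin n))) (Sp Sn : Finset (Fin n)) : ℤ :=
  if h : G.Nonempty then
    G.sup' h fun F => ((Sp ∩ F).card : ℤ) + ((Sn \ F).card : ℤ)
      - ((Sn ∩ F).card : ℤ) - ((Sp \ F).card : ℤ)
  else 0

/-- A delta-matroid on `[n]`: a nonempty family of subsets of `Fin n` (each `F` encoding the
size-`n` admissible set `(F, [n] \ F)`), satisfying the symmetric exchange axiom. -/
structure DeltaMatroid (n : ℕ) where
  feas : Finset (Finset (Fin n))
  nonempty : feas.Nonempty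
  exchange : ∀ F₁ ∈ feas, ∀ F₂ ∈ feas, ∀ x ∈ F₁ ∆ F₂, ∃ y ∈ F₁ ∆ F₂, F₁ ∆ {x, y} ∈ feas

/-- The rank function `g_D` of a delta-matroid, on admissible sets `(Sp, Sn)`. -/
noncomputable def DeltaMatroid.g {n : ℕ} (D : DeltaMatroid n) :
    Finset (Fin n) → Finset (Fin n) → ℤ :=
  gFam D.feas

/-- The U-polynomial of a family `G` on ground set `E`, in `ℤ[u,v]` with `u = X 0`, `v = X 1`:
`Σ_S u^{|E|−|S|} v^{(|S|−g(S))/2}`, the sum over admissible sets `S = (Sp, Sn)` on `E`. -/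
noncomputable def Upoly {n : ℕ} (E : Finset (Fin n)) (G : Finset (Finset (Fin n))) :
    MvPolynomial (Fin 2) ℤ :=
  ∑ Sp ∈ E.powerset, ∑ Sn ∈ (E \ Sp).powerset,
    (MvPolynomial.X 0) ^ (E.card - Sp.card - Sn.card) *
      (MvPolynomial.X 1) ^ ((((Sp.card + Sn.card : ℤ)) - gFam G Sp Sn).toNat / 2)

section Aux
variable {n : ℕ}

/-- value of a feasible set on an admissible pair -/
def aval (Sp Sn F : Finset (Fin n)) : ℤ :=
  ((Sp ∩ F).card : ℤ) + ((Sn \ F).card : ℤ) - ((Sn ∩ F).card : ℤ) - ((Sp \ F).card : ℤ)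

lemma half_sum (S F : Finset (Fin n)) :
    ((S ∩ F).card : ℤ) - ((S \ F).card : ℤ) = ∑ j ∈ S, (if j ∈ F then (1:ℤ) else -1) := by
  rw [Finset.sum_ite, Finset.sum_const, Finset.sum_const, Finset.filter_mem_eq_inter,
    ← Finset.sdiff_eq_filter]
  ring

lemma aval_eq_sum (Sp Sn F : Finset (Fin n)) :
    aval Sp Sn F = (∑ j ∈ Sp, (if j ∈ F then (1:ℤ) else -1))
      + ∑ j ∈ Sn, (if j ∈ F then (-1:ℤ) else 1) := by
  have h1 := half_sum Sp F
  have h2 := half_sum Sn F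
  have h3 : ∑ j ∈ Sn, (if j ∈ F then (-1:ℤ) else 1)
      = - ∑ j ∈ Sn, (if j ∈ F then (1:ℤ) else -1) := by
    rw [← Finset.sum_neg_distrib]
    exact Finset.sum_congr rfl fun j _ => by split_ifs <;> ring
  rw [h3, aval, ← h1, ← h2]
  ring

lemma aval_erase {i : Fin n} {Sp Sn : Finset (Fin n)} (hip : i ∉ Sp) (hin : i ∉ Sn)
    (F : Finset (Fin n)) : aval Sp Sn (F.erase i) = aval Sp Sn F := by
  rw [aval_eq_sum, aval_eq_sum]
  congr 1 <;> refine Finset.sum_congr rfl fun j hj => ?_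
  · have : j ≠ i := fun h => hip (h ▸ hj)
    simp [Finset.mem_erase, this]
  · have : j ≠ i := fun h => hin (h ▸ hj)
    simp [Finset.mem_erase, this]

lemma aval_insert_p {i : Fin n} {Sp Sn : Finset (Fin n)} (hip : i ∉ Sp)
    (F : Finset (Fin n)) :
    aval (insert i Sp) Sn F = aval Sp Sn F + (if i ∈ F then 1 else -1) := by
  rw [aval_eq_sum, aval_eq_sum, Finset.sum_insert hip]
  ring

lemma aval_insert_n {i : Fin n} {Sp Sn : Finset (Fin n)} (hin : i ∉ Sn)
    (F : Finset (Fin n)) :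
    aval Sp (insert i Sn) F = aval Sp Sn F + (if i ∈ F then -1 else 1) := by
  rw [aval_eq_sum, aval_eq_sum, Finset.sum_insert hin]
  ring

lemma aval_symmDiff_single {Sp Sn : Finset (Fin n)} (hd : Disjoint Sp Sn)
    (F : Finset (Fin n)) (y : Fin n) :
    aval Sp Sn F - 2 ≤ aval Sp Sn (F ∆ {y}) := by
  rw [aval_eq_sum, aval_eq_sum]
  have key : ∀ S : Finset (Fin n), y ∉ S → ∀ c d : ℤ,
      (∑ j ∈ S, (if j ∈ F ∆ {y} then c else d)) = ∑ j ∈ S, (if j ∈ F then c else d) := by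
    intro S hy c d
    refine Finset.sum_congr rfl fun j hj => ?_
    have hne : j ≠ y := fun h => hy (h ▸ hj)
    simp [Finset.mem_symmDiff, hne]
  have keyE : ∀ (S : Finset (Fin n)) (c d : ℤ),
      (∑ j ∈ S.erase y, (if j ∈ F ∆ {y} then c else d)) =
        ∑ j ∈ S.erase y, (if j ∈ F then c else d) :=
    fun S c d => key _ (Finset.notMem_erase y S) c d
  have hyF : (y ∈ F ∆ {y}) ↔ y ∉ F := by
    simp [Finset.mem_symmDiff]
  by_cases hp : y ∈ Sp
  · have hn : y ∉ Sn := Finset.disjoint_left.mp hd hp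
    rw [← Finset.add_sum_erase _ _ hp, ← Finset.add_sum_erase _ _ hp, keyE, key Sn hn]
    have h2 : (if y ∈ F ∆ {y} then (1:ℤ) else -1) = if y ∈ F then -1 else 1 := by
      by_cases h : y ∈ F <;> simp [hyF, h]
    rw [h2]
    split_ifs <;> linarith
  · by_cases hn : y ∈ Sn
    · rw [← Finset.add_sum_erase _ _ hn, ← Finset.add_sum_erase _ _ hn, keyE, key Sp hp]
      have h2 : (if y ∈ F ∆ {y} then (-1:ℤ) else 1) = if y ∈ F then 1 else -1 := by
        by_cases h : y ∈ F <;> simp [hyF, h]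
      rw [h2]
      split_ifs <;> linarith
    · rw [key Sp hp, key Sn hn]
      linarith

lemma symmDiff_singleton_not_mem {F : Finset (Fin n)} {i : Fin n} (h : i ∉ F) :
    F ∆ {i} = insert i F := by
  ext j
  by_cases hj : j = i
  · subst hj; simp [Finset.mem_symmDiff, h]
  · simp [Finset.mem_symmDiff, hj]

lemma symmDiff_singleton_mem {F : Finset (Fin n)} {i : Fin n} (h : i ∈ F) :
    F ∆ {i} = F.erase i := by
  ext j
  by_cases hj : j = i
  · subst hj; simp [Finset.mem_symmDiff, h]
  · simp [Finset.mem_symmDiff, hj]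

lemma symmDiff_pair_not_mem {F : Finset (Fin n)} {i y : Fin n} (h : i ∉ F) (hy : y ≠ i) :
    F ∆ {i, y} = insert i (F ∆ {y}) ∧ i ∉ F ∆ {y} := by
  have hiy : i ∉ F ∆ {y} := by simp [Finset.mem_symmDiff, h, hy.symm]
  refine ⟨?_, hiy⟩
  ext j
  by_cases hj : j = i
  · subst hj; simp [Finset.mem_symmDiff, h]
  · simp [Finset.mem_symmDiff, hj, Finset.mem_insert]

lemma symmDiff_pair_mem {F : Finset (Fin n)} {i y : Fin n} (h : i ∈ F) (hy : y ≠ i) :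
    F ∆ {i, y} = (F ∆ {y}).erase i := by
  ext j
  by_cases hj : j = i
  · subst hj; simp [Finset.mem_symmDiff, h]
  · simp [Finset.mem_symmDiff, hj, Finset.mem_erase]

lemma sup'_eq_sup'_add {α β : Type*} {s : Finset α} {t : Finset β}
    (hs : s.Nonempty) (ht : t.Nonempty) (f : α → ℤ) (g : β → ℤ) (c : ℤ)
    (h1 : ∀ a ∈ s, ∃ b ∈ t, f a ≤ g b + c) (h2 : ∀ b ∈ t, ∃ a ∈ s, g b + c ≤ f a) :
    s.sup' hs f = t.sup' ht g + c := by
  apply le_antisymm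
  · refine Finset.sup'_le _ _ fun a ha => ?_
    obtain ⟨b, hb, hle⟩ := h1 a ha
    exact hle.trans (add_le_add_left (Finset.le_sup' g hb) c)
  · have : t.sup' ht g ≤ s.sup' hs f - c := by
      refine Finset.sup'_le _ _ fun b hb => ?_
      obtain ⟨a, ha, hle⟩ := h2 b hb
      have := Finset.le_sup' f ha
      linarith
    linarith

lemma gFam_eq {G : Finset (Finset (Fin n))} (h : G.Nonempty) (Sp Sn : Finset (Fin n)) :
    gFam G Sp Sn = G.sup' h (aval Sp Sn) := by
  rw [gFam, dif_pos h]
  rfl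

lemma gFam_le {G : Finset (Finset (Fin n))} (h : G.Nonempty) (Sp Sn : Finset (Fin n)) :
    gFam G Sp Sn ≤ Sp.card + Sn.card := by
  rw [gFam_eq h]
  refine Finset.sup'_le _ _ fun F _ => ?_
  have h1 : (Sp ∩ F).card ≤ Sp.card := Finset.card_le_card Finset.inter_subset_left
  have h2 : (Sn \ F).card ≤ Sn.card := Finset.card_le_card (Finset.sdiff_subset)
  rw [aval]
  have h3 : (0:ℤ) ≤ ((Sn ∩ F).card : ℤ) := Int.ofNat_nonneg _
  have h4 : (0:ℤ) ≤ ((Sp \ F).card : ℤ) := Int.ofNat_nonneg _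
  have h1' : ((Sp ∩ F).card : ℤ) ≤ Sp.card := by exact_mod_cast h1
  have h2' : ((Sn \ F).card : ℤ) ≤ Sn.card := by exact_mod_cast h2
  linarith

/-- projection: rank unchanged on admissible sets avoiding `i` -/
lemma gFam_proj {G : Finset (Finset (Fin n))} (h : G.Nonempty) {i : Fin n}
    {Sp Sn : Finset (Fin n)} (hip : i ∉ Sp) (hin : i ∉ Sn) :
    gFam G Sp Sn = gFam (G.image (·.erase i)) Sp Sn + 0 := by
  rw [gFam_eq h, gFam_eq (h.image _)]
  refine sup'_eq_sup'_add _ _ _ _ _ ?_ ?_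
  · intro F hF
    exact ⟨F.erase i, Finset.mem_image_of_mem _ hF, by rw [aval_erase hip hin, add_zero]⟩
  · intro b hb
    obtain ⟨F, hF, rfl⟩ := Finset.mem_image.mp hb
    exact ⟨F, hF, by rw [aval_erase hip hin, add_zero]⟩

/-- contraction: insert `i` in `Sp`, when `i` is not a loop -/
lemma gFam_contr {G : Finset (Finset (Fin n))} {i : Fin n}
    (hex : ∀ F₁ ∈ G, ∀ F₂ ∈ G, ∀ x ∈ F₁ ∆ F₂, ∃ y ∈ F₁ ∆ F₂, F₁ ∆ {x, y} ∈ G)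
    (hnl : ∃ F ∈ G, i ∈ F)
    {Sp Sn : Finset (Fin n)} (hip : i ∉ Sp) (hin : i ∉ Sn) (hd : Disjoint Sp Sn) :
    gFam G (insert i Sp) Sn
      = gFam ((G.filter fun F => i ∈ F).image (·.erase i)) Sp Sn + 1 := by
  obtain ⟨F₂, hF₂, hiF₂⟩ := hnl
  have hG : G.Nonempty := ⟨F₂, hF₂⟩
  have hGc : ((G.filter fun F => i ∈ F).image (·.erase i)).Nonempty :=
    ⟨F₂.erase i, Finset.mem_image_of_mem _ (Finset.mem_filter.mpr ⟨hF₂, hiF₂⟩)⟩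
  rw [gFam_eq hG, gFam_eq hGc]
  refine sup'_eq_sup'_add _ _ _ _ _ ?_ ?_
  · intro F hF
    by_cases hiF : i ∈ F
    · refine ⟨F.erase i, Finset.mem_image_of_mem _ (Finset.mem_filter.mpr ⟨hF, hiF⟩), ?_⟩
      rw [aval_insert_p hip, if_pos hiF, aval_erase hip hin]
    · -- use exchange to find a feasible set containing i close to F
      have hx : i ∈ F ∆ F₂ := Finset.mem_symmDiff.mpr (Or.inr ⟨hiF₂, hiF⟩)
      obtain ⟨y, _, hGy⟩ := hex F hF F₂ hF₂ i hx
      by_cases hy : y = i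
      · rw [hy] at hGy
        have hpair : (insert i ({i} : Finset (Fin n))) = {i} := by simp
        rw [hpair, symmDiff_singleton_not_mem hiF] at hGy
        refine ⟨(insert i F).erase i, Finset.mem_image_of_mem _
          (Finset.mem_filter.mpr ⟨hGy, Finset.mem_insert_self i F⟩), ?_⟩
        rw [Finset.erase_insert hiF, aval_insert_p hip, if_neg hiF]
        linarith
      · obtain ⟨heq, hinot⟩ := symmDiff_pair_not_mem hiF hy
        rw [heq] at hGy
        refine ⟨(insert i (F ∆ {y})).erase i, Finset.mem_image_of_mem _
          (Finset.mem_filter.mpr ⟨hGy, Finset.mem_insert_self i _⟩), ?_⟩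
        rw [Finset.erase_insert hinot, aval_insert_p hip, if_neg hiF]
        have := aval_symmDiff_single hd F y
        linarith
  · intro b hb
    obtain ⟨F, hF, rfl⟩ := Finset.mem_image.mp hb
    obtain ⟨hFG, hiF⟩ := Finset.mem_filter.mp hF
    refine ⟨F, hFG, ?_⟩
    rw [aval_insert_p hip, if_pos hiF, aval_erase hip hin]

/-- deletion: insert `i` in `Sn`, when `i` is not a coloop -/
lemma gFam_del {G : Finset (Finset (Fin n))} {i : Fin n}
    (hex : ∀ F₁ ∈ G, ∀ F₂ ∈ G, ∀ x ∈ F₁ ∆ F₂, ∃ y ∈ F₁ ∆ F₂, F₁ ∆ {x, y} ∈ G)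
    (hnc : ∃ F ∈ G, i ∉ F)
    {Sp Sn : Finset (Fin n)} (hip : i ∉ Sp) (hin : i ∉ Sn) (hd : Disjoint Sp Sn) :
    gFam G Sp (insert i Sn) = gFam (G.filter fun F => i ∉ F) Sp Sn + 1 := by
  obtain ⟨F₂, hF₂, hiF₂⟩ := hnc
  have hG : G.Nonempty := ⟨F₂, hF₂⟩
  have hGd : (G.filter fun F => i ∉ F).Nonempty := ⟨F₂, Finset.mem_filter.mpr ⟨hF₂, hiF₂⟩⟩
  rw [gFam_eq hG, gFam_eq hGd]
  refine sup'_eq_sup'_add _ _ _ _ _ ?_ ?_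
  · intro F hF
    by_cases hiF : i ∈ F
    · have hx : i ∈ F ∆ F₂ := Finset.mem_symmDiff.mpr (Or.inl ⟨hiF, hiF₂⟩)
      obtain ⟨y, _, hGy⟩ := hex F hF F₂ hF₂ i hx
      by_cases hy : y = i
      · rw [hy] at hGy
        have hpair : (insert i ({i} : Finset (Fin n))) = {i} := by simp
        rw [hpair, symmDiff_singleton_mem hiF] at hGy
        refine ⟨F.erase i, Finset.mem_filter.mpr ⟨hGy, Finset.notMem_erase i F⟩, ?_⟩
        rw [aval_insert_n hin, if_pos hiF, aval_erase hip hin]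
        linarith
      · rw [symmDiff_pair_mem hiF hy] at hGy
        refine ⟨(F ∆ {y}).erase i, Finset.mem_filter.mpr ⟨hGy, Finset.notMem_erase i _⟩, ?_⟩
        rw [aval_insert_n hin, if_pos hiF, aval_erase hip hin]
        have := aval_symmDiff_single hd F y
        linarith
    · refine ⟨F, Finset.mem_filter.mpr ⟨hF, hiF⟩, ?_⟩
      rw [aval_insert_n hin, if_neg hiF]
  · intro F hF
    obtain ⟨hFG, hiF⟩ := Finset.mem_filter.mp hF
    refine ⟨F, hFG, ?_⟩
    rw [aval_insert_n hin, if_neg hiF]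

/-- loop/coloop: rank shifts by a constant -/
lemma gFam_const_shift {G : Finset (Finset (Fin n))} (hG : G.Nonempty) {i : Fin n}
    {Sp Sn Tp Tn : Finset (Fin n)} (c : ℤ)
    (hf : ∀ F ∈ G, aval Tp Tn F = aval Sp Sn (F.erase i) + c) :
    gFam G Tp Tn = gFam (G.image (·.erase i)) Sp Sn + c := by
  rw [gFam_eq hG, gFam_eq (hG.image _)]
  refine sup'_eq_sup'_add _ _ _ _ _ ?_ ?_
  · intro F hF
    exact ⟨F.erase i, Finset.mem_image_of_mem _ hF, le_of_eq (hf F hF)⟩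
  · intro b hb
    obtain ⟨F, hF, rfl⟩ := Finset.mem_image.mp hb
    exact ⟨F, hF, le_of_eq (hf F hF).symm⟩

noncomputable def Tm {n : ℕ} (E : Finset (Fin n)) (G : Finset (Finset (Fin n)))
    (Sp Sn : Finset (Fin n)) : MvPolynomial (Fin 2) ℤ :=
  (MvPolynomial.X 0) ^ (E.card - Sp.card - Sn.card) *
    (MvPolynomial.X 1) ^ ((((Sp.card + Sn.card : ℤ)) - gFam G Sp Sn).toNat / 2)

lemma Upoly_Tm {n : ℕ} (E : Finset (Fin n)) (G : Finset (Finset (Fin n))) :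
    Upoly E G = ∑ Sp ∈ E.powerset, ∑ Sn ∈ (E \ Sp).powerset, Tm E G Sp Sn := rfl

section TmLemmas
variable {E E' : Finset (Fin n)} {G G' : Finset (Finset (Fin n))}
  {Sp Sn : Finset (Fin n)} {i : Fin n}

lemma Tm_u (hcard : E.card = E'.card + 1) (hle : Sp.card + Sn.card ≤ E'.card)
    (hg : gFam G Sp Sn = gFam G' Sp Sn) :
    Tm E G Sp Sn = MvPolynomial.X 0 * Tm E' G' Sp Sn := by
  rw [Tm, Tm, hg, show E.card - Sp.card - Sn.card = (E'.card - Sp.card - Sn.card) + 1 by omega,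
    pow_succ]
  ring

lemma Tm_contr (hip : i ∉ Sp) (hcard : E.card = E'.card + 1)
    (hle : Sp.card + Sn.card ≤ E'.card)
    (hg : gFam G (insert i Sp) Sn = gFam G' Sp Sn + 1) :
    Tm E G (insert i Sp) Sn = Tm E' G' Sp Sn := by
  rw [Tm, Tm, hg, Finset.card_insert_of_notMem hip]
  have e1 : E.card - (Sp.card + 1) - Sn.card = E'.card - Sp.card - Sn.card := by omega
  have e2 : (((Sp.card + 1 : ℕ) + Sn.card : ℤ) - (gFam G' Sp Sn + 1)).toNat / 2
      = (((Sp.card + Sn.card : ℤ)) - gFam G' Sp Sn).toNat / 2 := by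
    push_cast
    omega
  rw [e1, e2]

lemma Tm_del (hin : i ∉ Sn) (hcard : E.card = E'.card + 1)
    (hle : Sp.card + Sn.card ≤ E'.card)
    (hg : gFam G Sp (insert i Sn) = gFam G' Sp Sn + 1) :
    Tm E G Sp (insert i Sn) = Tm E' G' Sp Sn := by
  rw [Tm, Tm, hg, Finset.card_insert_of_notMem hin]
  have e1 : E.card - Sp.card - (Sn.card + 1) = E'.card - Sp.card - Sn.card := by omega
  have e2 : ((Sp.card + (Sn.card + 1 : ℕ) : ℤ) - (gFam G' Sp Sn + 1)).toNat / 2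
      = (((Sp.card + Sn.card : ℤ)) - gFam G' Sp Sn).toNat / 2 := by
    push_cast
    omega
  rw [e1, e2]

lemma Tm_v_p (hip : i ∉ Sp) (hcard : E.card = E'.card + 1)
    (hle : Sp.card + Sn.card ≤ E'.card)
    (hg : gFam G (insert i Sp) Sn = gFam G' Sp Sn - 1)
    (hub : gFam G' Sp Sn ≤ Sp.card + Sn.card) :
    Tm E G (insert i Sp) Sn = MvPolynomial.X 1 * Tm E' G' Sp Sn := by
  rw [Tm, Tm, hg, Finset.card_insert_of_notMem hip]
  have e1 : E.card - (Sp.card + 1) - Sn.card = E'.card - Sp.card - Sn.card := by omega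
  have e2 : (((Sp.card + 1 : ℕ) + Sn.card : ℤ) - (gFam G' Sp Sn - 1)).toNat / 2
      = (((Sp.card + Sn.card : ℤ)) - gFam G' Sp Sn).toNat / 2 + 1 := by
    push_cast
    omega
  rw [e1, e2, pow_succ]
  ring

lemma Tm_v_n (hin : i ∉ Sn) (hcard : E.card = E'.card + 1)
    (hle : Sp.card + Sn.card ≤ E'.card)
    (hg : gFam G Sp (insert i Sn) = gFam G' Sp Sn - 1)
    (hub : gFam G' Sp Sn ≤ Sp.card + Sn.card) :
    Tm E G Sp (insert i Sn) = MvPolynomial.X 1 * Tm E' G' Sp Sn := by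
  rw [Tm, Tm, hg, Finset.card_insert_of_notMem hin]
  have e1 : E.card - Sp.card - (Sn.card + 1) = E'.card - Sp.card - Sn.card := by omega
  have e2 : ((Sp.card + (Sn.card + 1 : ℕ) : ℤ) - (gFam G' Sp Sn - 1)).toNat / 2
      = (((Sp.card + Sn.card : ℤ)) - gFam G' Sp Sn).toNat / 2 + 1 := by
    push_cast
    omega
  rw [e1, e2, pow_succ]
  ring

end TmLemmas

lemma sum_split {M : Type*} [AddCommMonoid M] (i : Fin n) (E' : Finset (Fin n)) (hi : i ∉ E')
    (t : Finset (Fin n) → Finset (Fin n) → M) :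
    (∑ Sp ∈ (insert i E').powerset, ∑ Sn ∈ ((insert i E') \ Sp).powerset, t Sp Sn)
      = ∑ Sp ∈ E'.powerset, ∑ Sn ∈ (E' \ Sp).powerset,
          (t Sp Sn + t Sp (insert i Sn) + t (insert i Sp) Sn) := by
  rw [Finset.sum_powerset_insert hi]
  have h1 : ∀ Sp ∈ E'.powerset,
      (∑ Sn ∈ ((insert i E') \ Sp).powerset, t Sp Sn)
        = ∑ Sn ∈ (E' \ Sp).powerset, (t Sp Sn + t Sp (insert i Sn)) := by
    intro Sp hSp
    have hiSp : i ∉ Sp := fun h => hi (Finset.mem_powerset.mp hSp h)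
    have hd : (insert i E') \ Sp = insert i (E' \ Sp) := by
      ext j
      by_cases hj : j = i
      · subst hj; simp [hi, hiSp]
      · simp [hj]
    rw [hd, Finset.sum_powerset_insert (fun h => hi (Finset.mem_sdiff.mp h).1),
      ← Finset.sum_add_distrib]
  have h2 : ∀ Sp ∈ E'.powerset,
      (∑ Sn ∈ ((insert i E') \ insert i Sp).powerset, t (insert i Sp) Sn)
        = ∑ Sn ∈ (E' \ Sp).powerset, t (insert i Sp) Sn := by
    intro Sp hSp
    have hd : (insert i E') \ insert i Sp = E' \ Sp := by
      ext j
      by_cases hj : j = i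
      · subst hj; simp [hi]
      · simp [hj]
    rw [hd]
  rw [Finset.sum_congr rfl h1, Finset.sum_congr rfl h2, ← Finset.sum_add_distrib]
  refine Finset.sum_congr rfl fun Sp _ => ?_
  rw [← Finset.sum_add_distrib]

end Aux

/-- **Proposition (deletion–contraction recursion for the U-polynomial).** If `n = 0` then
`U_D = 1`. For `i ∈ [n]`: if `i` is neither a loop nor a coloop, then
`U_D = U_{D/i} + U_{D∖i} + u ⋅ U_{D({i})}`; if `i` is a loop or a coloop, then
`U_D = (u + v + 1) ⋅ U_{D({i})}`. -/
theorem deltaMatroid_U_recursion (n : ℕ) (D : DeltaMatroid n) :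
    (n = 0 → Upoly (univ : Finset (Fin n)) D.feas = 1) ∧
    ∀ i : Fin n,
      (((∃ F ∈ D.feas, i ∈ F) ∧ (∃ F ∈ D.feas, i ∉ F)) →
        Upoly (univ : Finset (Fin n)) D.feas
          = Upoly (univ.erase i) ((D.feas.filter fun F => i ∈ F).image (·.erase i))
            + Upoly (univ.erase i) (D.feas.filter fun F => i ∉ F)
            + MvPolynomial.X 0 * Upoly (univ.erase i) (D.feas.image (·.erase i))) ∧
      (((∀ F ∈ D.feas, i ∉ F) ∨ (∀ F ∈ D.feas, i ∈ F)) →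
        Upoly (univ : Finset (Fin n)) D.feas
          = (MvPolynomial.X 0 + MvPolynomial.X 1 + 1)
            * Upoly (univ.erase i) (D.feas.image (·.erase i))) := by
  constructor
  · -- base case n = 0
    intro hn
    subst hn
    have hg : gFam D.feas (∅ : Finset (Fin 0)) ∅ = 0 := by
      rw [gFam_eq D.nonempty]
      have hc : D.feas.sup' D.nonempty (aval ∅ ∅) = D.feas.sup' D.nonempty (fun _ => (0:ℤ)) :=
        Finset.sup'_congr D.nonempty rfl (fun F _ => by simp [aval])
      rw [hc, Finset.sup'_const]
    rw [Upoly]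
    simp [Finset.univ_eq_empty, hg]
  · intro i
    have hiE' : i ∉ univ.erase i := Finset.notMem_erase i univ
    have hu : (univ : Finset (Fin n)) = insert i (univ.erase i) :=
      (Finset.insert_erase (Finset.mem_univ i)).symm
    have hcard : (univ : Finset (Fin n)).card = (univ.erase i).card + 1 := by
      have h0 : 0 < (univ : Finset (Fin n)).card := Finset.card_pos.mpr ⟨i, Finset.mem_univ i⟩
      rw [Finset.card_erase_of_mem (Finset.mem_univ i)]
      omega
    have hsplit := sum_split i (univ.erase i) hiE' (Tm univ D.feas)
    rw [← hu] at hsplit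
    -- facts for each admissible pair on the smaller ground set
    have hfacts : ∀ Sp ∈ (univ.erase i).powerset, ∀ Sn ∈ ((univ.erase i) \ Sp).powerset,
        i ∉ Sp ∧ i ∉ Sn ∧ Disjoint Sp Sn ∧ Sp.card + Sn.card ≤ (univ.erase i).card := by
      intro Sp hSp Sn hSn
      have hSp' : Sp ⊆ univ.erase i := Finset.mem_powerset.mp hSp
      have hSn' : Sn ⊆ (univ.erase i) \ Sp := Finset.mem_powerset.mp hSn
      have hip : i ∉ Sp := fun h => hiE' (hSp' h)
      have hin : i ∉ Sn := fun h => hiE' (Finset.mem_sdiff.mp (hSn' h)).1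
      have hd : Disjoint Sp Sn := Finset.disjoint_left.mpr
        (fun {a} ha hb => (Finset.mem_sdiff.mp (hSn' hb)).2 ha)
      refine ⟨hip, hin, hd, ?_⟩
      rw [← Finset.card_union_of_disjoint hd]
      exact Finset.card_le_card
        (Finset.union_subset hSp' (hSn'.trans (Finset.sdiff_subset)))
    constructor
    · -- i neither loop nor coloop
      rintro ⟨hi1, hi2⟩
      rw [Upoly_Tm, hsplit, Upoly_Tm, Upoly_Tm, Upoly_Tm, Finset.mul_sum]
      simp only [Finset.mul_sum]
      rw [← Finset.sum_add_distrib, ← Finset.sum_add_distrib]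
      refine Finset.sum_congr rfl fun Sp hSp => ?_
      rw [← Finset.sum_add_distrib, ← Finset.sum_add_distrib]
      refine Finset.sum_congr rfl fun Sn hSn => ?_
      obtain ⟨hip, hin, hd, hle⟩ := hfacts Sp hSp Sn hSn
      have t1 : Tm univ D.feas Sp Sn
          = MvPolynomial.X 0 * Tm (univ.erase i) (D.feas.image (·.erase i)) Sp Sn := by
        refine Tm_u hcard hle ?_
        have := gFam_proj D.nonempty hip hin (G := D.feas) (i := i)
        rw [add_zero] at this
        exact this
      have t2 : Tm univ D.feas Sp (insert i Sn)
          = Tm (univ.erase i) (D.feas.filter fun F => i ∉ F) Sp Sn :=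
        Tm_del hin hcard hle (gFam_del D.exchange hi2 hip hin hd)
      have t3 : Tm univ D.feas (insert i Sp) Sn
          = Tm (univ.erase i) ((D.feas.filter fun F => i ∈ F).image (·.erase i)) Sp Sn :=
        Tm_contr hip hcard hle (gFam_contr D.exchange hi1 hip hin hd)
      rw [t1, t2, t3]
      ring
    · -- i a loop or a coloop
      intro hlc
      rw [Upoly_Tm, hsplit, Upoly_Tm, Finset.mul_sum]
      simp only [Finset.mul_sum]
      refine Finset.sum_congr rfl fun Sp hSp => ?_
      refine Finset.sum_congr rfl fun Sn hSn => ?_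
      obtain ⟨hip, hin, hd, hle⟩ := hfacts Sp hSp Sn hSn
      have hGp : (D.feas.image (·.erase i)).Nonempty := D.nonempty.image _
      have hub : gFam (D.feas.image (·.erase i)) Sp Sn ≤ Sp.card + Sn.card :=
        gFam_le hGp Sp Sn
      have t1 : Tm univ D.feas Sp Sn
          = MvPolynomial.X 0 * Tm (univ.erase i) (D.feas.image (·.erase i)) Sp Sn := by
        refine Tm_u hcard hle ?_
        have := gFam_proj D.nonempty hip hin (G := D.feas) (i := i)
        rw [add_zero] at this
        exact this
      rcases hlc with hl | hc
      · -- loop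
        have g1 : gFam D.feas (insert i Sp) Sn
            = gFam (D.feas.image (·.erase i)) Sp Sn - 1 := by
          have := gFam_const_shift D.nonempty (i := i) (Sp := Sp) (Sn := Sn)
            (Tp := insert i Sp) (Tn := Sn) (-1)
            (fun F hF => by
              rw [aval_insert_p hip, if_neg (hl F hF), aval_erase hip hin])
          linarith [this]
        have g2 : gFam D.feas Sp (insert i Sn)
            = gFam (D.feas.image (·.erase i)) Sp Sn + 1 := by
          have := gFam_const_shift D.nonempty (i := i) (Sp := Sp) (Sn := Sn)
            (Tp := Sp) (Tn := insert i Sn) (1)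
            (fun F hF => by
              rw [aval_insert_n hin, if_neg (hl F hF), aval_erase hip hin])
          exact this
        have t2 : Tm univ D.feas Sp (insert i Sn)
            = Tm (univ.erase i) (D.feas.image (·.erase i)) Sp Sn :=
          Tm_del hin hcard hle g2
        have t3 : Tm univ D.feas (insert i Sp) Sn
            = MvPolynomial.X 1 * Tm (univ.erase i) (D.feas.image (·.erase i)) Sp Sn :=
          Tm_v_p hip hcard hle g1 hub
        rw [t1, t2, t3]
        ring
      · -- coloop
        have g1 : gFam D.feas (insert i Sp) Sn
            = gFam (D.feas.image (·.erase i)) Sp Sn + 1 := by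
          have := gFam_const_shift D.nonempty (i := i) (Sp := Sp) (Sn := Sn)
            (Tp := insert i Sp) (Tn := Sn) (1)
            (fun F hF => by
              rw [aval_insert_p hip, if_pos (hc F hF), aval_erase hip hin])
          exact this
        have g2 : gFam D.feas Sp (insert i Sn)
            = gFam (D.feas.image (·.erase i)) Sp Sn - 1 := by
          have := gFam_const_shift D.nonempty (i := i) (Sp := Sp) (Sn := Sn)
            (Tp := Sp) (Tn := insert i Sn) (-1)
            (fun F hF => by
              rw [aval_insert_n hin, if_pos (hc F hF), aval_erase hip hin])
          linarith [this]
        have t2 : Tm univ D.feas Sp (insert i Sn)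
            = MvPolynomial.X 1 * Tm (univ.erase i) (D.feas.image (·.erase i)) Sp Sn :=
          Tm_v_n hin hcard hle g2 hub
        have t3 : Tm univ D.feas (insert i Sp) Sn
            = Tm (univ.erase i) (D.feas.image (·.erase i)) Sp Sn :=
          Tm_contr hip hcard hle g1
        rw [t1, t2, t3]
        ring
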